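/- arXiv:2403.07310 — 3 statements merged into one kernel-verified Lean document; each statement's English description precedes it below -/
import Mathlib

section
/- Let φ(x) = 1/(1 + exp(−x)) be the sigmoid function and φ' its derivative. For every u ∈ ℝ and every σ ≠ 0, the strict inequality β₂(u,σ) − α₂(u,σ)²/(u² + 1) > 0 holds; that is, E_{z∼N(u,1)}[φ'(σ·z)²·z²] > (E_{z∼N(u,1)}[φ'(σ·z)·z²])²/(u² + 1). -/
open MeasureTheory ProbabilityTheory

/-- The sigmoid function `φ(x) = 1/(1 + exp(−x))`. -/
noncomputable def phi (x : ℝ) : ℝ := 1 / (1 + Real.exp (-x))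

/-- The derivative of the sigmoid, `φ' = φ(1−φ)`. -/
noncomputable def phi' (x : ℝ) : ℝ := phi x * (1 - phi x)

/-- `α_q(u,σ) = E_{z∼N(u,1)}[φ'(σ·z)·z^q]`. -/
noncomputable def alphaQ (q : ℕ) (u σ : ℝ) : ℝ :=
  ∫ z, phi' (σ * z) * z ^ q ∂(gaussianReal u 1)

/-- `β_q(u,σ) = E_{z∼N(u,1)}[φ'(σ·z)²·z^q]`. -/
noncomputable def betaQ (q : ℕ) (u σ : ℝ) : ℝ :=
  ∫ z, (phi' (σ * z)) ^ 2 * z ^ q ∂(gaussianReal u 1)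


section Helpers
open Real

lemma phi_pos (x : ℝ) : 0 < phi x := by unfold phi; positivity

lemma phi_lt_one (x : ℝ) : phi x < 1 := by
  unfold phi
  rw [div_lt_one (by positivity)]
  linarith [Real.exp_pos (-x)]

lemma phi'_pos (x : ℝ) : 0 < phi' x :=
  mul_pos (phi_pos x) (by linarith [phi_lt_one x])

lemma phi'_le_one (x : ℝ) : phi' x ≤ 1 := by
  have h1 := phi_pos x
  have h2 := phi_lt_one x
  unfold phi'
  nlinarith

lemma phi_neg (x : ℝ) : phi (-x) = 1 - phi x := by
  unfold phi
  rw [neg_neg]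
  have h1 : (0:ℝ) < 1 + Real.exp (-x) := by positivity
  have h2 : (0:ℝ) < 1 + Real.exp x := by positivity
  have h3 : Real.exp (-x) * Real.exp x = 1 := by
    rw [← Real.exp_add]; simp
  field_simp
  nlinarith

lemma phi'_neg (x : ℝ) : phi' (-x) = phi' x := by
  unfold phi'
  rw [phi_neg]; ring

lemma phi_strictMono : StrictMono phi := by
  intro x y hxy
  unfold phi
  have h1 : (0:ℝ) < 1 + Real.exp (-x) := by positivity
  have h2 : (0:ℝ) < 1 + Real.exp (-y) := by positivity
  rw [div_lt_div_iff₀ h1 h2]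
  have := Real.exp_lt_exp.mpr (neg_lt_neg hxy)
  linarith

lemma phi_half_le {x : ℝ} (hx : 0 ≤ x) : 1/2 ≤ phi x := by
  unfold phi
  rw [le_div_iff₀ (by positivity)]
  have : Real.exp (-x) ≤ 1 := Real.exp_le_one_iff.mpr (by linarith)
  linarith

lemma phi'_strictAnti {x y : ℝ} (hx : 0 ≤ x) (hxy : x < y) : phi' y < phi' x := by
  have ha := phi_half_le hx
  have hb := phi_strictMono hxy
  have hc := phi_lt_one y
  unfold phi'
  nlinarith

lemma continuous_phi : Continuous phi := by
  unfold phi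
  exact continuous_const.div (by continuity) (fun x => by positivity)

lemma continuous_phi' : Continuous phi' :=
  continuous_phi.mul (continuous_const.sub continuous_phi)

lemma levelset_finite (c : ℝ) : {x : ℝ | phi' x = c}.Finite := by
  set S := {x : ℝ | phi' x = c} with hS
  have key : ∀ a b : ℝ, 0 ≤ a → a < b → a ∈ S → b ∈ S → False := by
    intro a b ha hab haS hbS
    have := phi'_strictAnti ha hab
    rw [Set.mem_setOf_eq] at haS hbS
    rw [haS, hbS] at this
    exact lt_irrefl _ this
  have h1 : (S ∩ Set.Ici 0).Subsingleton := by
    intro a ha b hb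
    rcases lt_trichotomy a b with h | h | h
    · exact absurd (key a b ha.2 h ha.1 hb.1) (by simp)
    · exact h
    · exact absurd (key b a hb.2 h hb.1 ha.1) (by simp)
  have h2 : (S ∩ Set.Iio 0).Subsingleton := by
    intro a ha b hb
    have hmem : ∀ x : ℝ, x ∈ S → -x ∈ S := by
      intro x hx
      rw [Set.mem_setOf_eq, phi'_neg]
      exact hx
    rcases lt_trichotomy a b with h | h | h
    · exact absurd (key (-b) (-a) (by simpa using le_of_lt hb.2) (by linarith)
        (hmem b hb.1) (hmem a ha.1)) (by simp)
    · exact h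
    · exact absurd (key (-a) (-b) (by simpa using le_of_lt ha.2) (by linarith)
        (hmem a ha.1) (hmem b hb.1)) (by simp)
  refine Set.Finite.subset (h1.finite.union h2.finite) ?_
  intro x hx
  rcases le_or_gt 0 x with h | h
  · exact Or.inl ⟨hx, h⟩
  · exact Or.inr ⟨hx, h⟩


lemma integrable_exp_half : Integrable (fun x : ℝ => Real.exp (-(1/2) * x^2)) :=
  integrable_exp_neg_mul_sq (by norm_num)

lemma integrable_mul_exp_half : Integrable (fun x : ℝ => x * Real.exp (-(1/2) * x^2)) :=
  integrable_mul_exp_neg_mul_sq (by norm_num)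

lemma integrable_sq_exp_half : Integrable (fun x : ℝ => x^2 * Real.exp (-(1/2) * x^2)) := by
  have h := integrable_rpow_mul_exp_neg_mul_sq (b := 1/2) (by norm_num) (s := 2) (by norm_num)
  have he : ∀ x : ℝ, x ^ (2:ℝ) = x ^ (2:ℕ) := by
    intro x
    rw [← Real.rpow_natCast x 2]
    norm_num
  simpa [he] using h

lemma int_exp_half : ∫ x : ℝ, Real.exp (-(1/2) * x^2) = Real.sqrt (2*π) := by
  rw [integral_gaussian, show π/(1/2) = 2*π by ring]

lemma int_mul_exp_half : ∫ x : ℝ, x * Real.exp (-(1/2) * x^2) = 0 := by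
  have h := integral_neg_eq_self (fun x : ℝ => x * Real.exp (-(1/2) * x^2)) (volume : Measure ℝ)
  have h2 : ∫ x : ℝ, (-x) * Real.exp (-(1/2) * (-x)^2) =
      - ∫ x : ℝ, x * Real.exp (-(1/2) * x^2) := by
    rw [← integral_neg]
    congr 1
    ext x
    ring_nf
  simp only [neg_sq] at h h2
  linarith

lemma int_sq_exp_half : ∫ x : ℝ, x^2 * Real.exp (-(1/2) * x^2) = Real.sqrt (2*π) := by
  have hu : ∀ x : ℝ, HasDerivAt (fun x : ℝ => x) 1 x := fun x => hasDerivAt_id x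
  have hv : ∀ x : ℝ, HasDerivAt (fun x : ℝ => -Real.exp (-(1/2) * x^2))
      (x * Real.exp (-(1/2) * x^2)) x := by
    intro x
    have h1 : HasDerivAt (fun x : ℝ => -(1/2) * x^2) (-x) x := by
      have := (hasDerivAt_pow 2 x).const_mul (-(1/2) : ℝ)
      simpa using this.congr_deriv (by push_cast; ring)
    have h2 := (h1.exp).neg
    exact h2.congr_deriv (by ring)
  have huv' : Integrable ((fun x : ℝ => x) * fun x => x * Real.exp (-(1/2) * x^2)) := by
    have := integrable_sq_exp_half
    refine this.congr ?_
    filter_upwards with x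
    simp [Pi.mul_apply]; ring
  have hu'v : Integrable ((fun _ : ℝ => (1:ℝ)) * fun x => -Real.exp (-(1/2) * x^2)) := by
    refine integrable_exp_half.neg.congr ?_
    filter_upwards with x
    simp
  have huv : Integrable ((fun x : ℝ => x) * fun x => -Real.exp (-(1/2) * x^2)) := by
    refine integrable_mul_exp_half.neg.congr ?_
    filter_upwards with x
    simp [Pi.mul_apply]
  have key := integral_mul_deriv_eq_deriv_mul_of_integrable (fun x _ => hu x) (fun x _ => hv x) huv' hu'v huv
  have e1 : ∫ x : ℝ, x * (x * Real.exp (-(1/2) * x^2)) = ∫ x : ℝ, x^2 * Real.exp (-(1/2) * x^2) := by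
    congr 1; ext x; ring
  have e2 : ∫ x : ℝ, (1:ℝ) * (-Real.exp (-(1/2) * x^2)) = - ∫ x : ℝ, Real.exp (-(1/2) * x^2) := by
    rw [← integral_neg]; congr 1; ext x; ring
  rw [e1] at key
  rw [key, e2, neg_neg, int_exp_half]

lemma pdf_one_eq (u x : ℝ) :
    gaussianPDFReal u 1 x = (Real.sqrt (2*π))⁻¹ * Real.exp (-(1/2) * (x-u)^2) := by
  simp only [gaussianPDFReal, NNReal.coe_one, mul_one]
  congr 1
  ring

lemma gaussianPDF_eq_coe (u : ℝ) :
    gaussianPDF u 1 = fun x => (((gaussianPDFReal u 1 x).toNNReal : NNReal) : ENNReal) := rfl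

lemma integral_gaussianReal_eq (u : ℝ) (g : ℝ → ℝ) :
    ∫ z, g z ∂(gaussianReal u 1) = ∫ x, gaussianPDFReal u 1 x * g x := by
  rw [gaussianReal_of_var_ne_zero u one_ne_zero, gaussianPDF_eq_coe,
    integral_withDensity_eq_integral_smul (measurable_gaussianPDFReal u 1).real_toNNReal g]
  congr 1
  ext x
  simp [NNReal.smul_def, Real.coe_toNNReal _ (gaussianPDFReal_nonneg u 1 x)]

lemma integrable_gaussianReal_iff (u : ℝ) (g : ℝ → ℝ) :
    Integrable g (gaussianReal u 1) ↔
      Integrable (fun x => gaussianPDFReal u 1 x * g x) volume := by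
  rw [gaussianReal_of_var_ne_zero u one_ne_zero, gaussianPDF_eq_coe,
    integrable_withDensity_iff_integrable_smul (measurable_gaussianPDFReal u 1).real_toNNReal]
  constructor <;> intro h <;> refine h.congr (Filter.Eventually.of_forall fun x => ?_) <;>
    simp [NNReal.smul_def, Real.coe_toNNReal _ (gaussianPDFReal_nonneg u 1 x)]

lemma integrable_shifted (u : ℝ) :
    Integrable (fun y : ℝ => ((y+u)^2+1) * Real.exp (-(1/2) * y^2)) := by
  have h := integrable_sq_exp_half.add
    ((integrable_mul_exp_half.const_mul (2*u)).add (integrable_exp_half.const_mul (u^2+1)))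
  refine h.congr (Filter.Eventually.of_forall fun y => ?_)
  simp only [Pi.add_apply]
  ring

lemma integrable_pdf_weight (u : ℝ) :
    Integrable (fun x : ℝ => gaussianPDFReal u 1 x * (x^2+1)) := by
  have h := ((integrable_shifted u).comp_sub_right u).const_mul (Real.sqrt (2*π))⁻¹
  refine h.congr (Filter.Eventually.of_forall fun x => ?_)
  dsimp only
  rw [pdf_one_eq]
  simp only [sub_add_cancel]
  ring

lemma integrable_gaussian_of_bound (u : ℝ) {g : ℝ → ℝ} (hg : Continuous g) (C : ℝ)
    (hC : ∀ x, |g x| ≤ C * (x^2+1)) : Integrable g (gaussianReal u 1) := by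
  rw [integrable_gaussianReal_iff]
  refine Integrable.mono' ((integrable_pdf_weight u).const_mul C) ?_ ?_
  · exact ((measurable_gaussianPDFReal u 1).mul hg.measurable).aestronglyMeasurable
  · refine Filter.Eventually.of_forall fun x => ?_
    have h0 := gaussianPDFReal_nonneg u 1 x
    have := hC x
    rw [Real.norm_eq_abs, abs_mul, abs_of_nonneg h0]
    calc gaussianPDFReal u 1 x * |g x| ≤ gaussianPDFReal u 1 x * (C * (x^2+1)) := by
          exact mul_le_mul_of_nonneg_left this h0
      _ = C * (gaussianPDFReal u 1 x * (x^2+1)) := by ring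

lemma integral_pdf_mul_sq (u : ℝ) :
    ∫ x : ℝ, gaussianPDFReal u 1 x * x^2 = u^2+1 := by
  have key := integral_add_right_eq_self (μ := volume)
    (fun x : ℝ => gaussianPDFReal u 1 x * x^2) u
  rw [← key]
  have he : ∀ x : ℝ, gaussianPDFReal u 1 (x+u) * (x+u)^2 =
      (Real.sqrt (2*π))⁻¹ * (x^2 * Real.exp (-(1/2)*x^2)
        + ((2*u) * (x * Real.exp (-(1/2)*x^2)) + u^2 * Real.exp (-(1/2)*x^2))) := by
    intro x
    rw [pdf_one_eq]
    simp only [add_sub_cancel_right]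
    ring
  simp_rw [he]
  have i2 : Integrable (fun x : ℝ => 2*u*(x*Real.exp (-(1/2)*x^2))) :=
    integrable_mul_exp_half.const_mul (2*u)
  have i3 : Integrable (fun x : ℝ => u^2 * Real.exp (-(1/2)*x^2)) :=
    integrable_exp_half.const_mul (u^2)
  have i23 : Integrable (fun x : ℝ =>
      2*u*(x*Real.exp (-(1/2)*x^2)) + u^2 * Real.exp (-(1/2)*x^2)) := i2.add i3
  rw [integral_const_mul _ _, integral_add integrable_sq_exp_half i23, integral_add i2 i3,
    integral_const_mul _ _, integral_const_mul _ _, int_sq_exp_half, int_mul_exp_half, int_exp_half]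
  have hpos : (0:ℝ) < Real.sqrt (2*π) := Real.sqrt_pos.mpr (by positivity)
  field_simp
  ring

lemma second_moment (u : ℝ) : ∫ z, z^2 ∂(gaussianReal u 1) = u^2+1 := by
  rw [integral_gaussianReal_eq u (fun z => z^2)]
  exact integral_pdf_mul_sq u

end Helpers

theorem stmt_1 (u σ : ℝ) (hσ : σ ≠ 0) :
    betaQ 2 u σ - (alphaQ 2 u σ) ^ 2 / (u ^ 2 + 1) > 0 := by
  have hApos : (0:ℝ) < u^2+1 := by positivity
  set A : ℝ := u^2+1 with hA
  set B : ℝ := alphaQ 2 u σ with hB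
  have hcont : Continuous fun z : ℝ => phi' (σ * z) :=
    continuous_phi'.comp (continuous_const.mul continuous_id)
  have h1 : Integrable (fun z => phi' (σ*z) * z^2) (gaussianReal u 1) := by
    refine integrable_gaussian_of_bound u (hcont.mul (continuous_pow 2)) 1 fun z => ?_
    have ha := (phi'_pos (σ*z)).le
    have hb := phi'_le_one (σ*z)
    rw [abs_of_nonneg (by positivity)]
    nlinarith [sq_nonneg z]
  have h2 : Integrable (fun z => (phi' (σ*z))^2 * z^2) (gaussianReal u 1) := by
    refine integrable_gaussian_of_bound u ((hcont.pow 2).mul (continuous_pow 2)) 1 fun z => ?_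
    have ha := (phi'_pos (σ*z)).le
    have hb := phi'_le_one (σ*z)
    have hb2 : (phi' (σ*z))^2 ≤ 1 := by nlinarith
    rw [abs_of_nonneg (by positivity)]
    nlinarith [sq_nonneg z, mul_nonneg (sub_nonneg.mpr hb2) (sq_nonneg z)]
  have h3 : Integrable (fun z : ℝ => z^2) (gaussianReal u 1) := by
    refine integrable_gaussian_of_bound u (continuous_pow 2) 1 fun z => ?_
    rw [abs_of_nonneg (by positivity)]
    nlinarith [sq_nonneg z]
  have hh : Integrable (fun z => (A * phi' (σ*z) - B)^2 * z^2) (gaussianReal u 1) := by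
    refine integrable_gaussian_of_bound u
      (((continuous_const.mul hcont).sub continuous_const).pow 2 |>.mul (continuous_pow 2))
      ((A+|B|)^2) fun z => ?_
    have ha := (phi'_pos (σ*z)).le
    have hb := phi'_le_one (σ*z)
    have hub : A * phi' (σ*z) - B ≤ A + |B| := by
      nlinarith [le_abs_self B, neg_abs_le B]
    have hlb : -(A + |B|) ≤ A * phi' (σ*z) - B := by
      nlinarith [le_abs_self B, neg_abs_le B]
    have hs : (A * phi' (σ*z) - B)^2 ≤ (A + |B|)^2 := sq_le_sq' hlb hub
    rw [abs_of_nonneg (by positivity)]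
    nlinarith [sq_nonneg z, mul_nonneg (sub_nonneg.mpr hs) (sq_nonneg z)]
  have hexp : ∫ z, (A * phi' (σ*z) - B)^2 * z^2 ∂(gaussianReal u 1)
      = A^2 * betaQ 2 u σ - A * B^2 := by
    have e : (fun z => (A * phi' (σ*z) - B)^2 * z^2)
        = fun z => A^2 * ((phi' (σ*z))^2 * z^2) +
            ((-(2*A*B)) * (phi' (σ*z) * z^2) + B^2 * z^2) := by
      funext z; ring
    have i1 : Integrable (fun z => A^2 * ((phi' (σ*z))^2 * z^2)) (gaussianReal u 1) :=
      h2.const_mul _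
    have i2 : Integrable (fun z => (-(2*A*B)) * (phi' (σ*z) * z^2)) (gaussianReal u 1) :=
      h1.const_mul _
    have i3 : Integrable (fun z : ℝ => B^2 * z^2) (gaussianReal u 1) := h3.const_mul _
    have i23 : Integrable (fun z => (-(2*A*B)) * (phi' (σ*z) * z^2) + B^2 * z^2)
      (gaussianReal u 1) := i2.add i3
    rw [e, integral_add i1 i23, integral_add i2 i3, integral_const_mul,
      integral_const_mul, integral_const_mul, second_moment]
    have eb : (∫ z, (phi' (σ*z))^2 * z^2 ∂(gaussianReal u 1)) = betaQ 2 u σ := rfl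
    have ea : (∫ z, phi' (σ*z) * z^2 ∂(gaussianReal u 1)) = B := rfl
    rw [eb, ea, ← hA]
    ring
  have hpos : 0 < ∫ z, (A * phi' (σ*z) - B)^2 * z^2 ∂(gaussianReal u 1) := by
    rw [integral_pos_iff_support_of_nonneg_ae
      (Filter.Eventually.of_forall fun z => by positivity) hh]
    set f : ℝ → ℝ := fun z => (A * phi' (σ*z) - B)^2 * z^2 with hf
    have hsub : (Function.support f)ᶜ ⊆
        insert (0:ℝ) ((fun z => σ * z) ⁻¹' {x | phi' x = B/A}) := by
      intro z hz
      simp only [Set.mem_compl_iff, Function.mem_support, not_not] at hz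
      rcases mul_eq_zero.mp hz with h | h
      · have h' : A * phi' (σ*z) - B = 0 := by
          exact (pow_eq_zero_iff two_ne_zero).mp h
        refine Set.mem_insert_iff.mpr (Or.inr ?_)
        simp only [Set.mem_preimage, Set.mem_setOf_eq]
        rw [eq_div_iff (ne_of_gt hApos)]
        linarith
      · have hz0 : z = 0 := (pow_eq_zero_iff two_ne_zero).mp h
        exact Set.mem_insert_iff.mpr (Or.inl hz0)
    have hfin : (insert (0:ℝ) ((fun z => σ * z) ⁻¹' {x | phi' x = B/A})).Finite := by
      refine Set.Finite.insert _ ?_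
      refine Set.Finite.preimage ?_ (levelset_finite (B/A))
      intro a _ b _ hab
      exact mul_left_cancel₀ hσ hab
    have hvol : (volume : Measure ℝ) ((Function.support f)ᶜ) = 0 :=
      measure_mono_null hsub (hfin.measure_zero _)
    have hmu0 : (gaussianReal u 1) ((Function.support f)ᶜ) = 0 :=
      gaussianReal_absolutelyContinuous u one_ne_zero hvol
    by_contra hle
    push_neg at hle
    have h0 : (gaussianReal u 1) (Function.support f) = 0 := le_antisymm hle (zero_le)
    have hcontr : (gaussianReal u 1) Set.univ ≤ 0 := by
      calc (gaussianReal u 1) Set.univ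
          = (gaussianReal u 1) (Function.support f ∪ (Function.support f)ᶜ) := by
            rw [Set.union_compl_self]
        _ ≤ (gaussianReal u 1) (Function.support f) +
            (gaussianReal u 1) ((Function.support f)ᶜ) := measure_union_le _ _
        _ = 0 := by rw [h0, hmu0, add_zero]
    rw [measure_univ] at hcontr
    simp at hcontr
  have key : 0 < A^2 * betaQ 2 u σ - A * B^2 := hexp ▸ hpos
  rw [gt_iff_lt, sub_pos, div_lt_iff₀ hApos]
  nlinarith [key, hApos]
end

section
/- For every μ ≥ 0 and every real k₁ > 3, there exists σ₀ > 0 such that for all σ ≥ σ₀, ∫_{μ+2σ}^{∞} (t − 2σ)² · e^{−t²/2} dt ≥ σ^{−k₁} · e^{−2μσ − 2σ²}. -/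
set_option maxHeartbeats 1000000


open MeasureTheory

lemma stmt_8_integrable (c : ℝ) :
    Integrable (fun t : ℝ => (t - c) ^ 2 * Real.exp (-t ^ 2 / 2)) := by
  have h2 : Integrable fun t : ℝ => t ^ 2 * Real.exp (-(1/2) * t ^ 2) := by
    have := integrable_rpow_mul_exp_neg_mul_sq (b := 1/2) (by norm_num) (s := 2) (by norm_num)
    have heq : (fun t : ℝ => t ^ (2:ℝ) * Real.exp (-(1/2) * t ^ 2)) =
        fun t : ℝ => t ^ 2 * Real.exp (-(1/2) * t ^ 2) := by
      funext t
      rw [show (2:ℝ) = ((2:ℕ):ℝ) by norm_num, Real.rpow_natCast]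
    rwa [heq] at this
  have h1 : Integrable fun t : ℝ => t * Real.exp (-(1/2) * t ^ 2) :=
    integrable_mul_exp_neg_mul_sq (by norm_num)
  have h0 : Integrable fun t : ℝ => Real.exp (-(1/2) * t ^ 2) :=
    integrable_exp_neg_mul_sq (by norm_num)
  have hE : (fun t : ℝ => (t - c) ^ 2 * Real.exp (-t ^ 2 / 2)) =
      fun t : ℝ => t ^ 2 * Real.exp (-(1/2) * t ^ 2) +
        ((-(2*c)) * (t * Real.exp (-(1/2) * t ^ 2)) +
          (c ^ 2) * Real.exp (-(1/2) * t ^ 2)) := by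
    funext t
    have h : -t ^ 2 / 2 = -(1/2) * t ^ 2 := by ring
    rw [h]; ring
  rw [hE]
  exact h2.add ((h1.const_mul _).add (h0.const_mul _))

theorem stmt_8 (μ : ℝ) (hμ : 0 ≤ μ) (k₁ : ℝ) (hk : 3 < k₁) :
    ∃ σ₀ > 0, ∀ σ : ℝ, σ₀ ≤ σ →
      (∫ t in Set.Ici (μ + 2 * σ), (t - 2 * σ) ^ 2 * Real.exp (-t ^ 2 / 2)) ≥
        σ ^ (-k₁) * Real.exp (-2 * μ * σ - 2 * σ ^ 2) := by
  set C : ℝ := 8 * Real.exp (μ ^ 2 / 2 + μ + 3) with hCdef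
  have hC1 : 1 < C := by
    have := Real.one_le_exp (by positivity : (0:ℝ) ≤ μ ^ 2 / 2 + μ + 3)
    nlinarith
  have hC0 : 0 < C := lt_trans one_pos hC1
  set σ₀ : ℝ := C ^ (1 / (k₁ - 3)) with hσ₀def
  have hk3 : 0 < k₁ - 3 := by linarith
  have hσ₀1 : 1 < σ₀ := Real.one_lt_rpow_iff_of_pos hC0 |>.mpr (Or.inl ⟨hC1, by positivity⟩)
  refine ⟨σ₀, by linarith, fun σ hσ => ?_⟩
  have hσ1 : 1 < σ := lt_of_lt_of_le hσ₀1 hσ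
  have hσ0 : 0 < σ := by linarith
  set a : ℝ := μ + 2 * σ with hadef
  have ha0 : 0 < a := by positivity
  -- key: σ ^ (k₁ - 3) ≥ C
  have hpow : C ≤ σ ^ (k₁ - 3) := by
    have h1 : σ₀ ^ (k₁ - 3) ≤ σ ^ (k₁ - 3) :=
      Real.rpow_le_rpow (by positivity) hσ hk3.le
    have h2 : σ₀ ^ (k₁ - 3) = C := by
      rw [hσ₀def, ← Real.rpow_mul hC0.le, one_div_mul_cancel (ne_of_gt hk3), Real.rpow_one]
    linarith [h2 ▸ h1]
  -- lower bound for the integral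
  set m : ℝ := (1 / (4 * σ ^ 2)) * Real.exp (-(a + 1/σ) ^ 2 / 2) with hmdef
  have hIcc : Set.Icc (a + 1/(2*σ)) (a + 1/σ) ⊆ Set.Ici a := by
    intro t ht
    have := ht.1
    have h1 : 0 < 1/(2*σ) := by positivity
    simp only [Set.mem_Ici]
    linarith
  have hint : Integrable (fun t : ℝ => (t - 2*σ) ^ 2 * Real.exp (-t ^ 2 / 2)) :=
    stmt_8_integrable (2*σ)
  have hnonneg : ∀ t : ℝ, 0 ≤ (t - 2*σ) ^ 2 * Real.exp (-t ^ 2 / 2) := fun t => by positivity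
  have step1 : m * (1/(2*σ)) ≤
      ∫ t in Set.Icc (a + 1/(2*σ)) (a + 1/σ), (t - 2*σ) ^ 2 * Real.exp (-t ^ 2 / 2) := by
    have hle : 1/(2*σ) ≤ 1/σ := one_div_le_one_div_of_le hσ0 (by linarith)
    have hvol : (volume (Set.Icc (a + 1/(2*σ)) (a + 1/σ))).toReal = 1/(2*σ) := by
      rw [Real.volume_Icc, ENNReal.toReal_ofReal (by linarith)]
      field_simp
      ring
    have key := setIntegral_ge_of_const_le (c := m)
      (s := Set.Icc (a + 1/(2*σ)) (a + 1/σ)) measurableSet_Icc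
      (by rw [Real.volume_Icc]; exact ENNReal.ofReal_ne_top) ?_ hint.integrableOn
    · rw [measureReal_def, hvol, smul_eq_mul] at key; linarith [key]
    · intro t ht
      have ht1 := ht.1
      have ht2 := ht.2
      have htpos : 0 < t := by
        have : (0:ℝ) < 1/(2*σ) := by positivity
        linarith
      have hsq : (1/(2*σ)) ^ 2 ≤ (t - 2*σ) ^ 2 := by
        have h1 : 1/(2*σ) ≤ t - 2*σ := by
          have : μ + 1/(2*σ) ≤ t - 2*σ := by linarith [ht1]
          linarith
        have h2 : 0 < 1/(2*σ) := by positivity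
        nlinarith
      have hexp : Real.exp (-(a + 1/σ) ^ 2 / 2) ≤ Real.exp (-t ^ 2 / 2) := by
        apply Real.exp_le_exp.mpr
        have : t ^ 2 ≤ (a + 1/σ) ^ 2 := by nlinarith [ht2, htpos.le]
        linarith
      calc m = (1/(2*σ)) ^ 2 * Real.exp (-(a + 1/σ) ^ 2 / 2) := by
              rw [hmdef]; field_simp; ring
        _ ≤ (t - 2*σ) ^ 2 * Real.exp (-t ^ 2 / 2) :=
              mul_le_mul hsq hexp (Real.exp_pos _).le (sq_nonneg _)
  have step2 : (∫ t in Set.Icc (a + 1/(2*σ)) (a + 1/σ), (t - 2*σ) ^ 2 * Real.exp (-t ^ 2 / 2)) ≤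
      ∫ t in Set.Ici a, (t - 2*σ) ^ 2 * Real.exp (-t ^ 2 / 2) := by
    apply setIntegral_mono_set hint.integrableOn
    · exact Filter.Eventually.of_forall fun t => hnonneg t
    · exact Filter.Eventually.of_forall hIcc
  -- arithmetic: RHS ≤ m * (1/(2σ))
  have harith : σ ^ (-k₁) * Real.exp (-2 * μ * σ - 2 * σ ^ 2) ≤ m * (1/(2*σ)) := by
    have hm : m * (1/(2*σ)) = Real.exp (-(a + 1/σ) ^ 2 / 2) / (8 * σ ^ 3) := by
      rw [hmdef]; field_simp; ring
    rw [hm]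
    have hσk : σ ^ (-k₁) ≤ 1 / (C * σ ^ 3) := by
      rw [Real.rpow_neg hσ0.le]
      rw [div_eq_inv_mul, mul_one]
      apply inv_anti₀ (by positivity)
      calc C * σ ^ 3 ≤ σ ^ (k₁ - 3) * σ ^ 3 := by nlinarith [pow_pos hσ0 3]
        _ = σ ^ (k₁ - 3) * σ ^ ((3:ℕ):ℝ) := by rw [Real.rpow_natCast]
        _ = σ ^ k₁ := by rw [← Real.rpow_add hσ0]; norm_num
    have hexp2 : Real.exp (-2 * μ * σ - 2 * σ ^ 2) / C ≤ Real.exp (-(a + 1/σ) ^ 2 / 2) / 8 := by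
      have h1 : Real.exp (-2*μ*σ - 2*σ^2) / C =
          Real.exp (-2*μ*σ - 2*σ^2 - (μ^2/2 + μ + 3)) / 8 := by
        rw [hCdef, Real.exp_sub (-2*μ*σ - 2*σ^2) (μ^2/2 + μ + 3)]
        ring
      rw [h1]
      have h2 : -2*μ*σ - 2*σ^2 - (μ^2/2 + μ + 3) ≤ -(a + 1/σ) ^ 2 / 2 := by
        have hinv1 : 1/σ ≤ 1 := by rw [div_le_one hσ0]; linarith
        have hinv0 : 0 < 1/σ := by positivity
        have hmu : μ * (1/σ) ≤ μ := mul_le_of_le_one_right hμ hinv1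
        have hms : σ * (1/σ) = 1 := by field_simp
        have hu1 : (1/σ)^2 ≤ 1 := by
          rw [div_pow, one_pow, div_le_one (by positivity)]
          nlinarith
        have key : (μ + 2*σ + 1/σ)^2 = μ^2 + 4*σ^2 + (1/σ)^2 + 4*(μ*σ) +
            2*(μ*(1/σ)) + 4*(σ*(1/σ)) := by ring
        rw [hadef, key, hms]
        linarith [hmu, hu1]
      exact div_le_div_of_nonneg_right ((Real.exp_le_exp.mpr h2)) (by norm_num) |>.trans_eq rfl
    calc σ ^ (-k₁) * Real.exp (-2 * μ * σ - 2 * σ ^ 2)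
        ≤ (1 / (C * σ ^ 3)) * Real.exp (-2 * μ * σ - 2 * σ ^ 2) :=
          mul_le_mul_of_nonneg_right hσk (Real.exp_pos _).le
      _ = (Real.exp (-2 * μ * σ - 2 * σ ^ 2) / C) * (σ ^ 3)⁻¹ := by ring
      _ ≤ (Real.exp (-(a + 1/σ) ^ 2 / 2) / 8) * (σ ^ 3)⁻¹ :=
          mul_le_mul_of_nonneg_right hexp2 (inv_nonneg.2 (pow_pos hσ0 3).le)
      _ = Real.exp (-(a + 1/σ) ^ 2 / 2) / (8 * σ ^ 3) := by ring
  calc σ ^ (-k₁) * Real.exp (-2 * μ * σ - 2 * σ ^ 2)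
      ≤ m * (1/(2*σ)) := harith
    _ ≤ _ := le_trans step1 step2
end

section
/- Let x be a random vector in ℝ^d distributed according to the Gaussian mixture Σ_{l=1}^L λ_l N(μ_l, Σ_l). For every integer t ≥ 1, E[‖x‖^{2t}] ≤ d^t · (2t−1)!! · Σ_{l=1}^L λ_l (‖μ_l‖ + ‖Σ_l‖^{1/2})^{2t}. -/
open MeasureTheory ProbabilityTheory RealInnerProductSpace Matrix

/-- The standard Gaussian measure on `ℝ^d` (i.i.d. `N(0,1)` coordinates). -/
noncomputable def stdGaussian (d : ℕ) : Measure (EuclideanSpace ℝ (Fin d)) :=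
  (Measure.pi fun _ : Fin d => gaussianReal 0 1).map
    (WithLp.equiv 2 (Fin d → ℝ)).symm

/-- The Gaussian measure `N(μ, A·Aᵀ)` on `ℝ^d`: the law of `μ + A·z` for a
standard Gaussian vector `z`. -/
noncomputable def gaussianVec {d : ℕ} (μ : EuclideanSpace ℝ (Fin d))
    (A : Matrix (Fin d) (Fin d) ℝ) : Measure (EuclideanSpace ℝ (Fin d)) :=
  (stdGaussian d).map (fun z => μ + Matrix.toEuclideanLin A z)

/-- The Gaussian mixture `Σ_l λ_l · N(μ_l, A_l·A_lᵀ)` on `ℝ^d`. -/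
noncomputable def gaussianMixture {d L : ℕ} (lam : Fin L → ℝ)
    (μ : Fin L → EuclideanSpace ℝ (Fin d)) (A : Fin L → Matrix (Fin d) (Fin d) ℝ) :
    Measure (EuclideanSpace ℝ (Fin d)) :=
  ∑ l, ENNReal.ofReal (lam l) • gaussianVec (μ l) (A l)

/-- The spectral (operator) norm of a matrix, i.e. the operator norm of the
induced linear map between Euclidean spaces. -/
noncomputable def specNorm {d : ℕ} (M : Matrix (Fin d) (Fin d) ℝ) : ℝ :=
  ‖LinearMap.toContinuousLinearMap (Matrix.toEuclideanLin M)‖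

open Real Function
open scoped ENNReal NNReal Matrix.Norms.L2Operator


noncomputable def DF (t : ℕ) : ℝ := ((2*t).factorial : ℝ) / (2^t * (t.factorial : ℝ))

lemma DF_zero : DF 0 = 1 := by simp [DF]

lemma DF_succ (t : ℕ) : DF (t+1) = (2*(t:ℝ)+1) * DF t := by
  have h1 : (2*(t+1)) = (2*t+1) + 1 := by ring
  unfold DF
  rw [h1, Nat.factorial_succ, Nat.factorial_succ]
  push_cast
  have h2 : (0:ℝ) < 2^t := by positivity
  have h3 : (0:ℝ) < (t.factorial : ℝ) := by exact_mod_cast t.factorial_pos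
  field_simp
  ring_nf
  rw [Nat.add_comm 1 t, Nat.factorial_succ]
  push_cast
  ring

lemma one_le_DF (t : ℕ) : 1 ≤ DF t := by
  induction t with
  | zero => simp [DF_zero]
  | succ n ih =>
    rw [DF_succ]
    nlinarith [ih]

lemma DF_pos (t : ℕ) : 0 < DF t := lt_of_lt_of_le one_pos (one_le_DF t)

lemma pow_le_factorial_mul_exp (n : ℕ) {x : ℝ} (hx : 0 ≤ x) :
    x ^ n ≤ n.factorial * Real.exp x := by
  have h : x ^ n / n.factorial ≤ Real.exp x := by
    calc x ^ n / n.factorial ≤ ∑ i ∈ Finset.range (n+1), x ^ i / i.factorial := by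
          refine Finset.single_le_sum (f := fun i => x ^ i / i.factorial) ?_
            (Finset.self_mem_range_succ n)
          intro i _; positivity
      _ ≤ Real.exp x := Real.sum_le_exp_of_nonneg hx _
  have hn : (0:ℝ) < n.factorial := by exact_mod_cast n.factorial_pos
  calc x ^ n = (x ^ n / n.factorial) * n.factorial := by field_simp
    _ ≤ Real.exp x * n.factorial := by
        exact mul_le_mul_of_nonneg_right h hn.le
    _ = n.factorial * Real.exp x := by ring

lemma integrable_pow_gauss (n : ℕ) :
    Integrable (fun x : ℝ => x ^ n * Real.exp (-(x^2/2))) := by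
  have hc : Continuous (fun x : ℝ => x ^ n * Real.exp (-(x^2/2))) := by continuity
  refine Integrable.mono' ((integrable_exp_neg_mul_sq (by norm_num : (0:ℝ) < 1/4)).const_mul
    ((n.factorial : ℝ) * Real.exp 1)) hc.aestronglyMeasurable ?_
  refine Filter.Eventually.of_forall fun x => ?_
  have h1 : |x| ^ n ≤ n.factorial * Real.exp |x| := pow_le_factorial_mul_exp n (abs_nonneg x)
  have h2 : Real.exp |x| * Real.exp (-(x^2/2)) ≤ Real.exp 1 * Real.exp (-(1/4) * x^2) := by
    rw [← Real.exp_add, ← Real.exp_add]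
    apply Real.exp_le_exp.mpr
    nlinarith [sq_nonneg (|x| - 2), sq_abs x]
  have hnn : (0:ℝ) ≤ (n.factorial : ℝ) := by positivity
  calc ‖x ^ n * Real.exp (-(x^2/2))‖ = |x| ^ n * Real.exp (-(x^2/2)) := by
        rw [norm_mul, norm_pow]; simp [Real.abs_exp]
    _ ≤ (n.factorial * Real.exp |x|) * Real.exp (-(x^2/2)) := by
        exact mul_le_mul_of_nonneg_right h1 (Real.exp_nonneg _)
    _ = (n.factorial : ℝ) * (Real.exp |x| * Real.exp (-(x^2/2))) := by ring
    _ ≤ (n.factorial : ℝ) * (Real.exp 1 * Real.exp (-(1/4) * x^2)) := by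
        exact mul_le_mul_of_nonneg_left h2 hnn
    _ = (n.factorial : ℝ) * Real.exp 1 * Real.exp (-(1/4) * x^2) := by ring

lemma gauss_moment_eq (t : ℕ) :
    ∫ x : ℝ, x ^ (2*t) * Real.exp (-(x^2/2)) = DF t * Real.sqrt (2*π) := by
  induction t with
  | zero =>
    have h := integral_gaussian (1/2)
    have h2 : ∀ x : ℝ, -(1/2 : ℝ) * x ^ 2 = -(x^2/2) := fun x => by ring
    simp only [h2] at h
    simp only [Nat.mul_zero, pow_zero, one_mul, DF_zero]
    rw [h, show π / (1/2 : ℝ) = 2*π by ring]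
  | succ n ih =>
    have hu : ∀ x : ℝ, HasDerivAt (fun x : ℝ => x ^ (2*n+1)) ((2*n+1 : ℝ) * x ^ (2*n)) x := by
      intro x
      simpa using (hasDerivAt_pow (2*n+1) x)
    have hv : ∀ x : ℝ, HasDerivAt (fun x : ℝ => Real.exp (-(x^2/2))) (-x * Real.exp (-(x^2/2))) x := by
      intro x
      have h1 : HasDerivAt (fun x : ℝ => -(x^2/2)) (-x) x := by
        have := ((hasDerivAt_pow 2 x).div_const 2).fun_neg
        simpa using this
      simpa [mul_comm] using h1.exp
    have key := integral_mul_deriv_eq_deriv_mul_of_integrable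
      (u := fun x : ℝ => x ^ (2*n+1)) (u' := fun x : ℝ => (2*n+1 : ℝ) * x ^ (2*n))
      (v := fun x : ℝ => Real.exp (-(x^2/2))) (v' := fun x : ℝ => -x * Real.exp (-(x^2/2)))
      (fun x _ => hu x) (fun x _ => hv x) ?_ ?_ ?_
    · have e1 : ∀ x : ℝ, x ^ (2*n+1) * (-x * Real.exp (-(x^2/2)))
          = -(x ^ (2*(n+1)) * Real.exp (-(x^2/2))) := by
        intro x; ring
      have e2 : ∀ x : ℝ, (2*n+1 : ℝ) * x ^ (2*n) * Real.exp (-(x^2/2))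
          = (2*(n:ℝ)+1) * (x ^ (2*n) * Real.exp (-(x^2/2))) := by
        intro x; ring
      simp only [e1, integral_neg] at key
      have key2 : ∫ x : ℝ, x ^ (2*(n+1)) * Real.exp (-(x^2/2))
          = ∫ x : ℝ, (2*(n:ℝ)+1) * (x ^ (2*n) * Real.exp (-(x^2/2))) := by
        have := neg_injective key
        rw [this]
        exact integral_congr_ae (Filter.Eventually.of_forall fun x => e2 x)
      rw [key2, integral_const_mul, ih, DF_succ]
      ring
    · have : (fun x : ℝ => x ^ (2*n+1)) * (fun x : ℝ => -x * Real.exp (-(x^2/2)))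
          = fun x : ℝ => -(x ^ (2*(n+1)) * Real.exp (-(x^2/2))) := by
        funext x; simp only [Pi.mul_apply]; ring
      rw [this]
      exact (integrable_pow_gauss (2*(n+1))).neg
    · have : (fun x : ℝ => (2*n+1 : ℝ) * x ^ (2*n)) * (fun x : ℝ => Real.exp (-(x^2/2)))
          = fun x : ℝ => (2*n+1 : ℝ) * (x ^ (2*n) * Real.exp (-(x^2/2))) := by
        funext x; simp only [Pi.mul_apply]; ring
      rw [this]
      exact (integrable_pow_gauss (2*n)).const_mul _
    · have : (fun x : ℝ => x ^ (2*n+1)) * (fun x : ℝ => Real.exp (-(x^2/2)))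
          = fun x : ℝ => x ^ (2*n+1) * Real.exp (-(x^2/2)) := by
        funext x; simp only [Pi.mul_apply]
      rw [this]
      exact integrable_pow_gauss (2*n+1)



lemma gaussianPDFReal_01 (x : ℝ) :
    gaussianPDFReal 0 1 x = (Real.sqrt (2*π))⁻¹ * Real.exp (-(x^2/2)) := by
  simp [gaussianPDFReal, neg_div]

lemma gaussianReal_density :
    gaussianReal 0 1 = volume.withDensity (fun x => ((gaussianPDFReal 0 1 x).toNNReal : ℝ≥0∞)) := by
  rw [gaussianReal_of_var_ne_zero 0 one_ne_zero]
  rfl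

lemma meas_pdf : Measurable (fun x => (gaussianPDFReal 0 1 x).toNNReal) :=
  (measurable_gaussianPDFReal 0 1).real_toNNReal

lemma integrable_pow_gaussianReal (n : ℕ) :
    Integrable (fun x : ℝ => x ^ n) (gaussianReal 0 1) := by
  rw [gaussianReal_density, integrable_withDensity_iff_integrable_coe_smul meas_pdf]
  have : ∀ x : ℝ, ((gaussianPDFReal 0 1 x).toNNReal : ℝ) • (x ^ n)
      = (Real.sqrt (2*π))⁻¹ * (x ^ n * Real.exp (-(x^2/2))) := by
    intro x
    rw [Real.coe_toNNReal _ (gaussianPDFReal_nonneg 0 1 x), gaussianPDFReal_01]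
    simp [smul_eq_mul]; ring
  simp only [this]
  exact (integrable_pow_gauss n).const_mul _

lemma moment_gaussianReal (t : ℕ) :
    ∫ x, x ^ (2*t) ∂(gaussianReal 0 1) = DF t := by
  rw [gaussianReal_density, integral_withDensity_eq_integral_smul meas_pdf]
  have : ∀ x : ℝ, ((gaussianPDFReal 0 1 x).toNNReal : ℝ≥0) • (x ^ (2*t))
      = (Real.sqrt (2*π))⁻¹ * (x ^ (2*t) * Real.exp (-(x^2/2))) := by
    intro x
    rw [NNReal.smul_def, Real.coe_toNNReal _ (gaussianPDFReal_nonneg 0 1 x), gaussianPDFReal_01]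
    rw [smul_eq_mul]
    ring
  simp only [this]
  rw [integral_const_mul, gauss_moment_eq]
  rw [inv_mul_eq_div, mul_div_assoc, div_self, mul_one]
  positivity




noncomputable def piG (d : ℕ) : Measure (Fin d → ℝ) :=
  Measure.pi fun _ : Fin d => gaussianReal 0 1

instance (d : ℕ) : IsProbabilityMeasure (piG d) := by
  unfold piG; infer_instance

lemma measurePreserving_eval_piG {d : ℕ} (i : Fin d) :
    MeasurePreserving (Function.eval i) (piG d) (gaussianReal 0 1) := by
  refine ⟨measurable_pi_apply i, ?_⟩
  refine Measure.ext fun s hs => ?_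
  rw [Measure.map_apply (measurable_pi_apply i) hs, Set.eval_preimage]
  simp only [piG]
  rw [Measure.pi_pi]
  rw [Finset.prod_eq_single i]
  · simp
  · intro j _ hj
    simp [Function.update_of_ne hj]
  · simp

lemma integrable_coord_pow {d : ℕ} (i : Fin d) (n : ℕ) :
    Integrable (fun y : Fin d → ℝ => (y i) ^ n) (piG d) := by
  have h := integrable_pow_gaussianReal n
  rw [← (measurePreserving_eval_piG i).map_eq] at h
  exact (integrable_map_measure h.aestronglyMeasurable
    (measurable_pi_apply i).aemeasurable).mp h

lemma moment_coord {d : ℕ} (i : Fin d) (t : ℕ) :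
    ∫ y, (y i) ^ (2*t) ∂(piG d) = DF t := by
  have h := moment_gaussianReal t
  rw [← (measurePreserving_eval_piG i).map_eq,
    integral_map (measurable_pi_apply i).aemeasurable
      (by exact (measurable_id.pow_const (2*t)).aestronglyMeasurable)] at h
  exact h

lemma sumsq_pow_le {d t : ℕ} (ht : 1 ≤ t) (y : Fin d → ℝ) :
    (∑ i, (y i)^2) ^ t ≤ (d:ℝ) ^ (t-1) * ∑ i, (y i) ^ (2*t) := by
  obtain ⟨m, rfl⟩ := Nat.exists_eq_add_of_le ht
  have h := pow_sum_div_card_le_sum_pow (s := Finset.univ) (f := fun i => (y i)^2)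
    (fun i _ => sq_nonneg _) m
  simp only [Finset.card_univ, Fintype.card_fin] at h
  have h2 : ∀ i : Fin d, ((y i)^2) ^ (m+1) = (y i) ^ (2*(1+m)) := by
    intro i; rw [← pow_mul]; ring_nf
  rcases Nat.eq_zero_or_pos d with hd | hd
  · subst hd; simp
  have hdp : (0:ℝ) < (d:ℝ) ^ m := by positivity
  rw [div_le_iff₀ hdp] at h
  calc (∑ i, (y i)^2) ^ (1+m) = (∑ i, (y i)^2) ^ (m+1) := by rw [Nat.add_comm]
    _ ≤ (∑ i, ((y i)^2)^(m+1)) * (d:ℝ)^m := h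
    _ = (d:ℝ) ^ (1+m-1) * ∑ i, (y i) ^ (2*(1+m)) := by
        simp only [h2, Nat.add_sub_cancel_left]
        ring








lemma std_eq (d : ℕ) :
    stdGaussian d = (piG d).map (MeasurableEquiv.toLp 2 (Fin d → ℝ)) := by
  rw [_root_.stdGaussian, piG]; rfl

instance (d : ℕ) : IsProbabilityMeasure (stdGaussian d) := by
  rw [std_eq]
  exact Measure.isProbabilityMeasure_map (MeasurableEquiv.measurable _).aemeasurable

lemma integral_std {d : ℕ} (f : EuclideanSpace ℝ (Fin d) → ℝ) :
    ∫ x, f x ∂(stdGaussian d)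
      = ∫ y, f ((MeasurableEquiv.toLp 2 (Fin d → ℝ)) y) ∂(piG d) := by
  rw [std_eq]; exact integral_map_equiv _ _

lemma integrable_std_iff {d : ℕ} (f : EuclideanSpace ℝ (Fin d) → ℝ) :
    Integrable f (stdGaussian d)
      ↔ Integrable (fun y => f ((MeasurableEquiv.toLp 2 (Fin d → ℝ)) y)) (piG d) := by
  rw [std_eq]
  exact integrable_map_equiv _ f

lemma norm_pow_eq {d : ℕ} (t : ℕ) (x : EuclideanSpace ℝ (Fin d)) :
    ‖x‖ ^ (2*t) = (∑ i, (x i)^2) ^ t := by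
  have h : ‖x‖^2 = ∑ i, (x i)^2 := by
    rw [EuclideanSpace.norm_eq, Real.sq_sqrt (Finset.sum_nonneg fun i _ => sq_nonneg _)]
    simp [sq_abs]
  rw [pow_mul, h]

lemma equiv_symm_apply {d : ℕ} (y : Fin d → ℝ) (i : Fin d) :
    ((MeasurableEquiv.toLp 2 (Fin d → ℝ)) y) i = y i := rfl

lemma integrable_norm_pow {d t : ℕ} (ht : 1 ≤ t) :
    Integrable (fun x : EuclideanSpace ℝ (Fin d) => ‖x‖ ^ (2*t)) (stdGaussian d) := by
  rw [integrable_std_iff]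
  simp only [norm_pow_eq t, equiv_symm_apply]
  refine Integrable.mono' (((integrable_finset_sum Finset.univ
    (fun i _ => integrable_coord_pow i (2*t))).const_mul ((d:ℝ)^(t-1)))) ?_ ?_
  · refine Continuous.aestronglyMeasurable ?_
    exact (continuous_finset_sum _ fun i _ => (continuous_apply i).pow 2).pow t
  · refine Filter.Eventually.of_forall fun y => ?_
    have h0 : (0:ℝ) ≤ ∑ i, (y i)^2 := Finset.sum_nonneg fun i _ => sq_nonneg _
    rw [Real.norm_eq_abs, abs_of_nonneg (pow_nonneg h0 t)]
    exact sumsq_pow_le ht y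

lemma moment_std_le {d t : ℕ} (ht : 1 ≤ t) :
    ∫ x, ‖x‖ ^ (2*t) ∂(stdGaussian d) ≤ (d:ℝ)^t * DF t := by
  rw [integral_std]
  simp only [norm_pow_eq t, equiv_symm_apply]
  have hle : ∫ y, (∑ i, (y i)^2)^t ∂(piG d)
      ≤ ∫ y, (d:ℝ)^(t-1) * ∑ i, (y i)^(2*t) ∂(piG d) := by
    refine integral_mono_of_nonneg (Filter.Eventually.of_forall fun y => ?_)
      ((integrable_finset_sum Finset.univ
        (fun i _ => integrable_coord_pow i (2*t))).const_mul ((d:ℝ)^(t-1)))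
      (Filter.Eventually.of_forall fun y => sumsq_pow_le ht y)
    exact pow_nonneg (Finset.sum_nonneg fun i _ => sq_nonneg _) t
  refine hle.trans ?_
  rw [integral_const_mul, integral_finset_sum Finset.univ
    (fun i _ => integrable_coord_pow i (2*t))]
  simp only [moment_coord]
  rw [Finset.sum_const, Finset.card_univ, Fintype.card_fin, nsmul_eq_mul]
  obtain ⟨m, rfl⟩ := Nat.exists_eq_add_of_le ht
  have : (d:ℝ)^(1+m-1) * ((d:ℝ) * DF (1+m)) = (d:ℝ)^(1+m) * DF (1+m) := by
    simp only [Nat.add_sub_cancel_left]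
    rw [pow_add, pow_one]
    ring
  rw [← mul_assoc, mul_assoc ((d:ℝ)^(1+m-1)), this]

lemma young_pow {y c : ℝ} (hy : 0 ≤ y) (hc : 0 ≤ c) {k n : ℕ} (hk : k ≤ n) (hn : 1 ≤ n) :
    y^k * c^(n-k) ≤ ((k:ℝ)/n) * y^n + (((n-k:ℕ):ℝ)/n) * c^n := by
  have hn0 : (0:ℝ) < (n:ℝ) := by exact_mod_cast hn
  have hw : (k:ℝ)/n + ((n-k:ℕ):ℝ)/n = 1 := by
    rw [← add_div, ← Nat.cast_add, Nat.add_sub_cancel' hk, div_self hn0.ne']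
  have h := Real.geom_mean_le_arith_mean2_weighted
    (by positivity : (0:ℝ) ≤ (k:ℝ)/n) (by positivity : (0:ℝ) ≤ ((n-k:ℕ):ℝ)/n)
    (by positivity : (0:ℝ) ≤ y^n) (by positivity : (0:ℝ) ≤ c^n) hw
  refine le_trans (le_of_eq ?_) h
  rw [← Real.rpow_natCast y n, ← Real.rpow_natCast c n,
    ← Real.rpow_mul hy, ← Real.rpow_mul hc]
  have e1 : (n:ℝ) * ((k:ℝ)/n) = (k:ℝ) := by field_simp
  have e2 : (n:ℝ) * (((n-k:ℕ):ℝ)/n) = ((n-k:ℕ):ℝ) := by field_simp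
  rw [e1, e2, Real.rpow_natCast, Real.rpow_natCast]

section Moment

variable {d t : ℕ}

noncomputable def cstd (d t : ℕ) : ℝ := ((d:ℝ)^t * DF t) ^ ((1:ℝ)/(2*t))

lemma Cq_pos (d t : ℕ) (hd : 1 ≤ d) : (1:ℝ) ≤ (d:ℝ)^t * DF t := by
  have h1 : (1:ℝ) ≤ (d:ℝ)^t := one_le_pow₀ (by exact_mod_cast hd)
  nlinarith [one_le_DF t]

lemma one_le_cstd (hd : 1 ≤ d) : 1 ≤ cstd d t := by
  have h : (1:ℝ) ^ ((1:ℝ)/(2*(t:ℝ))) ≤ ((d:ℝ)^t * DF t) ^ ((1:ℝ)/(2*(t:ℝ))) :=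
    Real.rpow_le_rpow zero_le_one (Cq_pos d t hd)
      (div_nonneg zero_le_one (mul_nonneg (by norm_num) (Nat.cast_nonneg t)))
  rw [Real.one_rpow] at h
  rw [cstd]
  exact h

lemma cstd_pow (hd : 1 ≤ d) (ht : 1 ≤ t) : (cstd d t) ^ (2*t) = (d:ℝ)^t * DF t := by
  have h0 : (0:ℝ) ≤ (d:ℝ)^t * DF t := le_trans zero_le_one (Cq_pos d t hd)
  rw [cstd, ← Real.rpow_natCast (((d:ℝ)^t * DF t) ^ ((1:ℝ)/(2*t))) (2*t),
    ← Real.rpow_mul h0]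
  have : (1:ℝ)/(2*t) * ((2*t : ℕ):ℝ) = 1 := by
    have : ((2*t : ℕ):ℝ) = 2*(t:ℝ) := by push_cast; ring
    rw [this]
    have ht0 : (0:ℝ) < (t:ℝ) := by exact_mod_cast ht
    field_simp
  rw [this, Real.rpow_one]

lemma integrable_norm_pow_le (hd : 1 ≤ d) (ht : 1 ≤ t) {k : ℕ} (hk : k ≤ 2*t) :
    Integrable (fun x : EuclideanSpace ℝ (Fin d) => ‖x‖ ^ k) (stdGaussian d) := by
  refine Integrable.mono' ((integrable_const (1:ℝ)).add (integrable_norm_pow ht)) ?_ ?_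
  · exact (continuous_norm.pow k).aestronglyMeasurable
  · refine Filter.Eventually.of_forall fun x => ?_
    rw [Real.norm_eq_abs, abs_of_nonneg (pow_nonneg (norm_nonneg x) k), Pi.add_apply]
    rcases le_or_gt ‖x‖ 1 with h | h
    · have : ‖x‖ ^ k ≤ 1 := pow_le_one₀ (norm_nonneg x) h
      nlinarith [pow_nonneg (norm_nonneg x) (2*t)]
    · have : ‖x‖ ^ k ≤ ‖x‖ ^ (2*t) := pow_le_pow_right₀ h.le hk
      linarith

lemma moment_norm_le_cstd (hd : 1 ≤ d) (ht : 1 ≤ t) {k : ℕ} (hk : k ≤ 2*t) :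
    ∫ x, ‖x‖ ^ k ∂(stdGaussian d) ≤ (cstd d t) ^ k := by
  set c := cstd d t with hc
  have hc1 : 1 ≤ c := one_le_cstd hd
  have hc0 : 0 < c := lt_of_lt_of_le one_pos hc1
  have hcpow : c ^ (2*t) = (d:ℝ)^t * DF t := cstd_pow hd ht
  have hM : ∫ x, ‖x‖ ^ (2*t) ∂(stdGaussian d) ≤ c ^ (2*t) := by
    rw [hcpow]; exact moment_std_le ht
  have ht2 : 1 ≤ 2*t := by omega
  -- pointwise Young
  have hpt : ∀ x : EuclideanSpace ℝ (Fin d), ‖x‖^k * c^(2*t-k)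
      ≤ ((k:ℝ)/((2*t:ℕ):ℝ)) * ‖x‖^(2*t) + (((2*t-k:ℕ):ℝ)/((2*t:ℕ):ℝ)) * c^(2*t) :=
    fun x => young_pow (norm_nonneg x) hc0.le hk ht2
  have hint : (∫ x, ‖x‖ ^ k ∂(stdGaussian d)) * c^(2*t-k) ≤ c^(2*t) := by
    rw [← integral_mul_const]
    have hrhs : Integrable (fun x : EuclideanSpace ℝ (Fin d) =>
        ((k:ℝ)/((2*t:ℕ):ℝ)) * ‖x‖^(2*t) + (((2*t-k:ℕ):ℝ)/((2*t:ℕ):ℝ)) * c^(2*t)) (stdGaussian d) :=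
      ((integrable_norm_pow ht).const_mul _).add (integrable_const _)
    refine le_trans (integral_mono_of_nonneg (Filter.Eventually.of_forall fun x => by positivity)
      hrhs (Filter.Eventually.of_forall hpt)) ?_
    rw [integral_add ((integrable_norm_pow ht).const_mul _) (integrable_const _),
      integral_const_mul, integral_const]
    simp only [measure_univ, ENNReal.toReal_one, smul_eq_mul, one_mul, probReal_univ]
    have h1 : ((k:ℝ)/((2*t:ℕ):ℝ)) * ∫ x, ‖x‖^(2*t) ∂(stdGaussian d)
        ≤ ((k:ℝ)/((2*t:ℕ):ℝ)) * c^(2*t) :=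
      mul_le_mul_of_nonneg_left hM (by positivity)
    have hw : (k:ℝ)/((2*t:ℕ):ℝ) + ((2*t-k:ℕ):ℝ)/((2*t:ℕ):ℝ) = 1 := by
      have hn0 : (0:ℝ) < ((2*t:ℕ):ℝ) := by exact_mod_cast ht2
      push_cast [Nat.cast_sub hk] at hn0 ⊢
      field_simp
      ring
    nlinarith [pow_nonneg hc0.le (2*t)]
  have hck : c^(2*t) = c^k * c^(2*t-k) := by
    rw [← pow_add, Nat.add_sub_cancel' hk]
  rw [hck] at hint
  exact le_of_mul_le_mul_right hint (pow_pos hc0 _)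

end Moment

lemma integrable_affine_pow {d t : ℕ} (hd : 1 ≤ d) (ht : 1 ≤ t) {a b : ℝ} :
    Integrable (fun x : EuclideanSpace ℝ (Fin d) => (a + b*‖x‖)^(2*t)) (stdGaussian d) := by
  have hexp : ∀ x : EuclideanSpace ℝ (Fin d), (a + b*‖x‖)^(2*t)
      = ∑ m ∈ Finset.range (2*t+1),
        (a^m * b^(2*t-m) * ((2*t).choose m : ℝ)) * ‖x‖^(2*t-m) := by
    intro x
    rw [add_pow]
    refine Finset.sum_congr rfl fun m hm => ?_
    rw [mul_pow]; ring
  simp only [hexp]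
  exact integrable_finset_sum _ fun m _ =>
    (integrable_norm_pow_le hd ht (Nat.sub_le _ _)).const_mul _

lemma key_integral_bound {d t : ℕ} (hd : 1 ≤ d) (ht : 1 ≤ t) {a b : ℝ}
    (ha : 0 ≤ a) (hb : 0 ≤ b) :
    ∫ x, (a + b*‖x‖)^(2*t) ∂(stdGaussian d)
      ≤ (d:ℝ)^t * DF t * (a+b)^(2*t) := by
  set c := cstd d t with hcdef
  have hc1 : 1 ≤ c := one_le_cstd hd
  have hc0 : (0:ℝ) < c := lt_of_lt_of_le one_pos hc1
  have hexp : ∀ x : EuclideanSpace ℝ (Fin d), (a + b*‖x‖)^(2*t)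
      = ∑ m ∈ Finset.range (2*t+1),
        (a^m * b^(2*t-m) * ((2*t).choose m : ℝ)) * ‖x‖^(2*t-m) := by
    intro x
    rw [add_pow]
    refine Finset.sum_congr rfl fun m hm => ?_
    rw [mul_pow]; ring
  calc ∫ x, (a + b*‖x‖)^(2*t) ∂(stdGaussian d)
      = ∑ m ∈ Finset.range (2*t+1), (a^m * b^(2*t-m) * ((2*t).choose m : ℝ))
          * ∫ x, ‖x‖^(2*t-m) ∂(stdGaussian d) := by
        simp only [hexp]
        rw [integral_finset_sum _ fun m _ =>
          (integrable_norm_pow_le hd ht (Nat.sub_le _ _)).const_mul _]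
        exact Finset.sum_congr rfl fun m _ => integral_const_mul _ _
    _ ≤ ∑ m ∈ Finset.range (2*t+1), (a^m * b^(2*t-m) * ((2*t).choose m : ℝ)) * c^(2*t-m) := by
        refine Finset.sum_le_sum fun m _ => ?_
        refine mul_le_mul_of_nonneg_left (moment_norm_le_cstd hd ht (Nat.sub_le _ _)) ?_
        positivity
    _ = (a + b*c)^(2*t) := by
        rw [add_pow]
        refine Finset.sum_congr rfl fun m hm => ?_
        rw [mul_pow]; ring
    _ ≤ (c*(a+b))^(2*t) := by
        refine pow_le_pow_left₀ (by positivity) ?_ _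
        nlinarith
    _ = (d:ℝ)^t * DF t * (a+b)^(2*t) := by
        rw [mul_pow, cstd_pow hd ht]



lemma specNorm_eq_l2 {d : ℕ} (M : Matrix (Fin d) (Fin d) ℝ) : specNorm M = ‖M‖ := rfl

lemma sqrt_specNorm {d : ℕ} (A : Matrix (Fin d) (Fin d) ℝ) :
    Real.sqrt (specNorm (A * Aᵀ)) = ‖A‖ := by
  have hAH : Aᵀᴴ = A := by
    ext i j; simp [Matrix.conjTranspose_apply]
  have h1 : specNorm (A * Aᵀ) = ‖A‖ * ‖A‖ := by
    rw [specNorm_eq_l2]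
    have hEq : A * Aᵀ = Aᵀᴴ * Aᵀ := by rw [hAH]
    have h2 : ‖Aᵀᴴ‖ = ‖Aᵀ‖ := Matrix.l2_opNorm_conjTranspose Aᵀ
    rw [hAH] at h2
    rw [hEq, Matrix.l2_opNorm_conjTranspose_mul_self, ← h2]
  rw [h1, Real.sqrt_mul_self (norm_nonneg _)]

lemma norm_toEuclideanLin_le {d : ℕ} (A : Matrix (Fin d) (Fin d) ℝ)
    (z : EuclideanSpace ℝ (Fin d)) :
    ‖Matrix.toEuclideanLin A z‖ ≤ ‖A‖ * ‖z‖ := by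
  have h := (LinearMap.toContinuousLinearMap (Matrix.toEuclideanLin A)).le_opNorm z
  exact h

lemma continuous_affine {d : ℕ} (μ0 : EuclideanSpace ℝ (Fin d))
    (A : Matrix (Fin d) (Fin d) ℝ) :
    Continuous (fun z : EuclideanSpace ℝ (Fin d) => μ0 + Matrix.toEuclideanLin A z) :=
  continuous_const.add (Matrix.toEuclideanLin A).continuous_of_finiteDimensional

lemma integrable_component {d t : ℕ} (hd : 1 ≤ d) (ht : 1 ≤ t)
    (μ0 : EuclideanSpace ℝ (Fin d)) (A : Matrix (Fin d) (Fin d) ℝ) :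
    Integrable (fun x : EuclideanSpace ℝ (Fin d) => ‖x‖ ^ (2*t)) (gaussianVec μ0 A) := by
  rw [gaussianVec]
  rw [integrable_map_measure (show Continuous fun x : EuclideanSpace ℝ (Fin d) => ‖x‖ ^ (2*t) from
      continuous_norm.pow (2*t)).aestronglyMeasurable
    (continuous_affine μ0 A).measurable.aemeasurable]
  refine Integrable.mono' (integrable_affine_pow hd ht (a := ‖μ0‖) (b := ‖A‖)) ?_ ?_
  · exact ((continuous_norm.comp (continuous_affine μ0 A)).pow _).aestronglyMeasurable
  · refine Filter.Eventually.of_forall fun z => ?_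
    simp only [Function.comp_apply]
    rw [Real.norm_eq_abs, abs_of_nonneg (pow_nonneg (norm_nonneg _) _)]
    refine pow_le_pow_left₀ (norm_nonneg _) ?_ _
    exact (norm_add_le _ _).trans (by
      have := norm_toEuclideanLin_le A z
      linarith)

lemma component_bound {d t : ℕ} (hd : 1 ≤ d) (ht : 1 ≤ t)
    (μ0 : EuclideanSpace ℝ (Fin d)) (A : Matrix (Fin d) (Fin d) ℝ) :
    ∫ x, ‖x‖ ^ (2*t) ∂(gaussianVec μ0 A)
      ≤ (d:ℝ)^t * DF t * (‖μ0‖ + ‖A‖)^(2*t) := by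
  rw [gaussianVec, integral_map (continuous_affine μ0 A).measurable.aemeasurable
    (show Continuous fun x : EuclideanSpace ℝ (Fin d) => ‖x‖ ^ (2*t) from
      continuous_norm.pow (2*t)).aestronglyMeasurable]
  refine le_trans (integral_mono_of_nonneg
    (Filter.Eventually.of_forall fun z => by positivity)
    (integrable_affine_pow hd ht (a := ‖μ0‖) (b := ‖A‖))
    (Filter.Eventually.of_forall fun z => ?_)) ?_
  · refine pow_le_pow_left₀ (norm_nonneg _) ?_ _
    exact (norm_add_le _ _).trans (by
      have := norm_toEuclideanLin_le A z
      linarith)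
  · exact key_integral_bound hd ht (norm_nonneg _) (norm_nonneg _)

theorem stmt_14 {d L : ℕ} (hd : 1 ≤ d) (hL : 1 ≤ L)
    (lam : Fin L → ℝ) (hlam : ∀ l, lam l ∈ Set.Ioo (0 : ℝ) 1) (hsum : ∑ l, lam l = 1)
    (μ : Fin L → EuclideanSpace ℝ (Fin d))
    (S A : Fin L → Matrix (Fin d) (Fin d) ℝ)
    (hS : ∀ l, (S l).PosSemidef) (hA : ∀ l, A l * (A l)ᵀ = S l)
    (t : ℕ) (ht : 1 ≤ t) :
    (∫ x, ‖x‖ ^ (2 * t) ∂(gaussianMixture lam μ A)) ≤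
      (d : ℝ) ^ t * (((2 * t).factorial : ℝ) / (2 ^ t * (t.factorial : ℝ))) *
        ∑ l, lam l * (‖μ l‖ + Real.sqrt (specNorm (S l))) ^ (2 * t) := by
  have hDF : ((2*t).factorial : ℝ) / (2^t * (t.factorial : ℝ)) = DF t := rfl
  rw [hDF, gaussianMixture]
  rw [integral_finset_sum_measure (fun l _ =>
    (integrable_component hd ht (μ l) (A l)).smul_measure ENNReal.ofReal_ne_top)]
  have step : ∀ l, ∫ x, ‖x‖^(2*t) ∂(ENNReal.ofReal (lam l) • gaussianVec (μ l) (A l))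
      = lam l * ∫ x, ‖x‖^(2*t) ∂(gaussianVec (μ l) (A l)) := by
    intro l
    rw [integral_smul_measure, ENNReal.toReal_ofReal (hlam l).1.le, smul_eq_mul]
  simp only [step]
  calc ∑ l, lam l * ∫ x, ‖x‖^(2*t) ∂(gaussianVec (μ l) (A l))
      ≤ ∑ l, lam l * ((d:ℝ)^t * DF t * (‖μ l‖ + ‖A l‖)^(2*t)) := by
        refine Finset.sum_le_sum fun l _ => ?_
        exact mul_le_mul_of_nonneg_left (component_bound hd ht (μ l) (A l)) (hlam l).1.le
    _ = (d:ℝ)^t * DF t * ∑ l, lam l * (‖μ l‖ + Real.sqrt (specNorm (S l)))^(2*t) := by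
        rw [Finset.mul_sum]
        refine Finset.sum_congr rfl fun l _ => ?_
        rw [← hA l, sqrt_specNorm]
        ring
end
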